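/- Let F ⊆ [t]^n be a family such that every coordinate i ∈ {1,...,n} is separating for F. Then n ≤ max{2(|F|−1), ⌊|F|²/4⌋}; in particular |F| = Ω(√n). -/

import Mathlib

open Filter

/-- An induced copy of the poset `P` inside the family `F`. -/
def InducedCopy (P : Type) [PartialOrder P] {α : Type} [PartialOrder α]
    (F : Set α) : Prop :=
  ∃ φ : P → α, Function.Injective φ ∧ (∀ x, φ x ∈ F) ∧ ∀ x y, φ x ≤ φ y ↔ x ≤ y

/-- `F` is induced `P`-free. -/
def PFree (P : Type) [PartialOrder P] {α : Type} [PartialOrder α] (F : Set α) : Prop :=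
  ¬ InducedCopy P F

/-- `F` is induced `P`-free and induced `P`-saturated. -/
def PSaturated (P : Type) [PartialOrder P] {α : Type} [PartialOrder α] (F : Set α) : Prop :=
  PFree P F ∧ ∀ g ∉ F, InducedCopy P (insert g F)

/-- The lifting operator `L_i`, copying coordinate `i` into a new last coordinate. -/
def lift {t n : ℕ} (i : Fin n) (f : Fin n → Fin t) : Fin (n + 1) → Fin t :=
  Fin.snoc f (f i)

/-- The coordinate-dropping operator `D_i`. -/
def drop {t n : ℕ} (i : Fin (n + 1)) (f : Fin (n + 1) → Fin t) : Fin n → Fin t :=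
  fun x => f (i.succAbove x)

/-- Coordinate `i` is separating for `F`. -/
def Separating {t n : ℕ} (F : Set (Fin n → Fin t)) (i : Fin n) : Prop :=
  ∃ f ∈ F, ∃ f' ∈ F, f ≠ f' ∧ (∀ x, x ≠ i → f x ≤ f' x) ∧ f' i < f i

/-- The induced saturation number `sat*([t]^n, P)`. -/
noncomputable def satStar (t n : ℕ) (P : Type) [PartialOrder P] : ℕ :=
  sInf {m | ∃ F : Set (Fin n → Fin t), PSaturated P F ∧ F.ncard = m}

/-- The antichain on `k` elements. -/
def AC (k : ℕ) := Fin k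

instance (k : ℕ) : PartialOrder (AC k) where
  le := Eq
  le_refl _ := rfl
  le_trans _ _ _ h h' := Eq.trans h h'
  le_antisymm _ _ h _ := h

/-- The unique cover twin property. -/
def UCTP (P : Type) [PartialOrder P] : Prop :=
  ∀ x y : P, y ⋖ x → ∃ y', y' ≠ y ∧ y' ≠ x ∧ y' ⋖ x


section Helpers

lemma arith_div4_step (y : ℕ) (hy : 4 ≤ y) : y^2/4 + 2 ≤ (y+1)^2/4 := by
  have h1 : (y+1)^2 = y^2 + (2*y+1) := by ring
  rw [h1]
  have h2 : y^2 + (2*y+1) = y^2 + (2*y+1) := rfl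
  generalize y^2 = a at *
  omega

lemma arith_div4_many (x : ℕ) (hx : 4 ≤ x) : ∀ d : ℕ, x^2/4 + 2*d ≤ (x+d)^2/4 := by
  intro d
  induction d with
  | zero => simp
  | succ d ih =>
    have h := arith_div4_step (x+d) (by omega)
    have : x + (d+1) = (x+d) + 1 := by ring
    rw [this]
    omega

lemma arith_halfsq (m : ℕ) (hm : 1 ≤ m) : (m-1)^2/4 + m/2 ≤ m^2/4 := by
  obtain ⟨n, rfl⟩ : ∃ n, m = n + 1 := ⟨m - 1, by omega⟩
  rcases Nat.even_or_odd' n with ⟨q, rfl | rfl⟩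
  · have e0 : (2*q + 1 - 1)^2 = 4*(q*q) := by
      have : 2*q + 1 - 1 = 2*q := by omega
      rw [this]; ring
    have e1 : (2*q+1)^2 = 4*(q*q)+4*q+1 := by ring
    rw [e0, e1]
    generalize q*q = a
    omega
  · have e0 : (2*q+1 + 1 - 1)^2 = 4*(q*q)+4*q+1 := by
      have : 2*q+1 + 1 - 1 = 2*q+1 := by omega
      rw [this]; ring
    have e1 : (2*q+1+1)^2 = 4*(q*q)+8*q+4 := by ring
    rw [e0, e1]
    generalize q*q = a
    omega

lemma arith_contract (m k : ℕ) (h2 : 2 ≤ k) (hk : k ≤ m) :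
    max (2*((m-k+1) - 1)) ((m-k+1)^2/4) + k ≤ max (2*(m-1)) (m^2/4) := by
  set c := m - k + 1 with hc
  have hc1 : 1 ≤ c := by omega
  have hcm : c ≤ m - 1 := by omega
  rcases max_cases (2*(c-1)) (c^2/4) with ⟨hmax, _⟩ | ⟨hmax, _⟩ <;> rw [hmax]
  · -- 2*(c-1) + k ≤ 2*(m-1)
    have : 2*(c-1) + k ≤ 2*(m-1) := by omega
    exact le_max_of_le_left this
  · -- c^2/4 + k ≤ max
    by_cases hc3 : c ≤ 3
    · have hsq : c^2/4 ≤ c - 1 := by interval_cases c <;> simp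
      have : c^2/4 + k ≤ 2*(m-1) := by omega
      exact le_max_of_le_left this
    · push_neg at hc3
      have h4 : 4 ≤ c := by omega
      have hd := arith_div4_many c h4 (m - c)
      have hcm' : c + (m - c) = m := by omega
      rw [hcm'] at hd
      have : c^2/4 + k ≤ m^2/4 := by omega
      exact le_max_of_le_right this

-- list helpers
variable {α : Type} {R : α → α → Prop}

lemma chain_rtg_head :
    ∀ (l : List α) (x b : α), List.Chain R x l → b ∈ x :: l → Relation.ReflTransGen R x b := by
  intro l
  induction l with
  | nil => intro x b _ hb; simp at hb; subst hb; exact .refl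
  | cons y l ih =>
    intro x b hc hb
    rcases List.chain_cons.1 hc with ⟨hxy, hc⟩
    rcases List.mem_cons.1 hb with rfl | hb
    · exact .refl
    · exact Relation.ReflTransGen.head hxy (ih y b hc hb)

lemma chain_rtg_last :
    ∀ (l : List α) (x y a : α), List.Chain R x (l ++ [y]) → a ∈ x :: (l ++ [y]) →
      Relation.ReflTransGen R a y := by
  intro l
  induction l with
  | nil =>
    intro x y a hc ha
    simp only [List.nil_append] at hc ha
    rcases List.chain_cons.1 hc with ⟨hxy, -⟩
    simp only [List.mem_cons, List.mem_singleton, List.not_mem_nil, or_false] at ha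
    rcases ha with rfl | rfl
    · exact Relation.ReflTransGen.single hxy
    · exact .refl
  | cons z l ih =>
    intro x y a hc ha
    simp only [List.cons_append] at hc ha
    rcases List.chain_cons.1 hc with ⟨hxz, hc2⟩
    rcases List.mem_cons.1 ha with rfl | ha2
    · exact Relation.ReflTransGen.head hxz (ih z y z hc2 (List.mem_cons_self))
    · exact ih z y a hc2 ha2

lemma chain_snoc :
    ∀ (l : List α) (x y : α), List.Chain R x l →
      R ((x :: l).getLast (List.cons_ne_nil _ _)) y → List.Chain R x (l ++ [y]) := by
  intro l
  induction l with
  | nil =>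
    intro x y _ h
    simp only [List.getLast_singleton] at h
    exact List.chain_cons.2 ⟨h, List.Chain.nil⟩
  | cons z l ih =>
    intro x y hc hr
    rcases List.chain_cons.1 hc with ⟨hxz, hc⟩
    rw [List.getLast_cons_cons] at hr
    exact List.chain_cons.2 ⟨hxz, ih z y hc hr⟩

lemma chain_mem_zip :
    ∀ (l : List α) (x : α), List.Chain R x l → ∀ p ∈ (x :: l).zip l, R p.1 p.2 := by
  intro l
  induction l with
  | nil => intro x _ p hp; simp at hp
  | cons y l ih =>
    intro x hc p hp
    rcases List.chain_cons.1 hc with ⟨hxy, hc⟩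
    rw [List.zip_cons_cons] at hp
    rcases List.mem_cons.1 hp with rfl | hp
    · exact hxy
    · exact ih y hc p hp

lemma chain_pairs :
    ∀ (l : List α) (x : α), List.Chain R x l →
      List.Chain (fun a b => (a, b) ∈ (x :: l).zip l) x l := by
  intro l
  induction l with
  | nil => intro x _; exact List.Chain.nil
  | cons y l ih =>
    intro x hc
    rcases List.chain_cons.1 hc with ⟨hxy, hc⟩
    refine List.chain_cons.2 ⟨?_, ?_⟩
    · rw [List.zip_cons_cons]; exact List.mem_cons_self
    · refine List.Chain.imp ?_ (ih y hc)
      intro a b hab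
      rw [List.zip_cons_cons]
      exact List.mem_cons_of_mem _ hab

lemma zip_append_right_trunc :
    ∀ (l₂ l₁ : List α) (a : α), l₂.length ≤ l₁.length → (l₁ ++ [a]).zip l₂ = l₁.zip l₂ := by
  intro l₂
  induction l₂ with
  | nil => intro l₁ a _; simp
  | cons y ys ih =>
    intro l₁ a hlen
    cases l₁ with
    | nil => simp at hlen
    | cons x xs =>
      simp only [List.cons_append, List.zip_cons_cons]
      rw [ih xs a (by simpa using hlen)]

lemma nodup_zip_left {β : Type} :
    ∀ (l₁ : List α) (l₂ : List β), l₁.Nodup → (l₁.zip l₂).Nodup := by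
  intro l₁
  induction l₁ with
  | nil => intro l₂ _; simp
  | cons x xs ih =>
    intro l₂ h
    cases l₂ with
    | nil => simp
    | cons y ys =>
      rw [List.zip_cons_cons, List.nodup_cons]
      rcases List.nodup_cons.1 h with ⟨hx, hxs⟩
      exact ⟨fun hmem => hx (List.of_mem_zip hmem).1, ih ys hxs⟩

lemma exists_dup_split [DecidableEq α] :
    ∀ (l : List α), ¬ l.Nodup → ∃ a l₁ l₂ l₃, l = l₁ ++ a :: l₂ ++ a :: l₃ := by
  intro l
  induction l with
  | nil => intro h; exact absurd List.nodup_nil h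
  | cons x xs ih =>
    intro h
    by_cases hx : x ∈ xs
    · obtain ⟨s, t, rfl⟩ := List.append_of_mem hx
      exact ⟨x, [], s, t, by simp⟩
    · have : ¬ xs.Nodup := fun hn => h (List.nodup_cons.2 ⟨hx, hn⟩)
      obtain ⟨a, l₁, l₂, l₃, rfl⟩ := ih this
      exact ⟨a, x :: l₁, l₂, l₃, by simp⟩

end Helpers

section DigraphDef

variable {V : Type} [DecidableEq V]

def eRel (E : Finset (V × V)) : V → V → Prop := fun a b => (a, b) ∈ E

def GoodP (E : Finset (V × V)) : Prop :=
  ∀ e ∈ E, ¬ Relation.ReflTransGen (eRel (E.erase e)) e.1 e.2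

lemma goodP_subset {E E' : Finset (V × V)} (hsub : E' ⊆ E) (h : GoodP E) : GoodP E' := by
  intro e he hrtg
  refine h e (hsub he) ?_
  refine Relation.ReflTransGen.mono ?_ _ _ hrtg
  intro a b hab
  rcases Finset.mem_erase.1 hab with ⟨hne, hmem⟩
  exact Finset.mem_erase.2 ⟨hne, hsub hmem⟩

lemma dag_bound (N : ℕ) : ∀ (S : Finset V) (E : Finset (V × V)),
    S.card ≤ N →
    (∀ e ∈ E, e.1 ∈ S ∧ e.2 ∈ S ∧ e.1 ≠ e.2) → GoodP E →
    (∀ u : V, ¬ Relation.TransGen (eRel E) u u) →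
    E.card ≤ S.card ^ 2 / 4 := by
  classical
  induction N with
  | zero =>
    intro S E hS hend _ _
    rcases Finset.eq_empty_or_nonempty E with rfl | ⟨e, he⟩
    · simp
    · exfalso
      have h1 := (hend e he).1
      have : S = ∅ := Finset.card_eq_zero.1 (Nat.le_zero.1 hS)
      rw [this] at h1
      exact absurd h1 (Finset.notMem_empty _)
  | succ N ih =>
    intro S E hS hend hP hacyc
    rcases Finset.eq_empty_or_nonempty E with rfl | ⟨e₀, he₀⟩
    · simp
    obtain ⟨u, v⟩ := e₀
    obtain ⟨huS, hvS, huv⟩ := hend _ he₀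
    simp only at huS hvS huv
    set Op : V → Finset V := fun x => (E.filter (fun e => e.1 = x)).image Prod.snd with hOp
    set In : V → Finset V := fun x => (E.filter (fun e => e.2 = x)).image Prod.fst with hIn
    have memOp : ∀ x w, w ∈ Op x ↔ (x, w) ∈ E := by
      intro x w
      simp only [hOp, Finset.mem_image, Finset.mem_filter]
      constructor
      · rintro ⟨⟨a, b⟩, ⟨hmem, rfl⟩, rfl⟩; exact hmem
      · intro hm; exact ⟨(x, w), ⟨hm, rfl⟩, rfl⟩
    have memIn : ∀ x w, w ∈ In x ↔ (w, x) ∈ E := by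
      intro x w
      simp only [hIn, Finset.mem_image, Finset.mem_filter]
      constructor
      · rintro ⟨⟨a, b⟩, ⟨hmem, rfl⟩, rfl⟩; exact hmem
      · intro hm; exact ⟨(w, x), ⟨hm, rfl⟩, rfl⟩
    have hOpS : ∀ x, Op x ⊆ S := fun x w hw => (hend _ ((memOp x w).1 hw)).2.1
    have hInS : ∀ x, In x ⊆ S := fun x w hw => (hend _ ((memIn x w).1 hw)).1
    have noloop : ∀ a b, (a, b) ∈ E → a ≠ b := fun a b hm => (hend _ hm).2.2
    have step : ∀ (t : V × V) (a b : V), (a, b) ∈ E → (a, b) ≠ t → eRel (E.erase t) a b :=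
      fun t a b hm hne => Finset.mem_erase.2 ⟨hne, hm⟩
    have dOpOp : Disjoint (Op u) (Op v) := by
      rw [Finset.disjoint_left]
      intro w hwu hwv
      have h1 := (memOp u w).1 hwu
      have h2 := (memOp v w).1 hwv
      have hvw : v ≠ w := noloop v w h2
      refine hP (u, w) h1 ?_
      refine Relation.ReflTransGen.head
        (step _ u v he₀ (fun hh => hvw (congrArg Prod.snd hh))) ?_
      exact Relation.ReflTransGen.single
        (step _ v w h2 (fun hh => huv (congrArg Prod.fst hh).symm))
    have dInIn : Disjoint (In u) (In v) := by
      rw [Finset.disjoint_left]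
      intro w hwu hwv
      have h1 := (memIn u w).1 hwu
      have h2 := (memIn v w).1 hwv
      have hwu' : w ≠ u := noloop w u h1
      refine hP (w, v) h2 ?_
      refine Relation.ReflTransGen.head
        (step _ w u h1 (fun hh => huv (congrArg Prod.snd hh))) ?_
      exact Relation.ReflTransGen.single
        (step _ u v he₀ (fun hh => hwu' (congrArg Prod.fst hh).symm))
    have dOpIn_uv : Disjoint (Op u) (In v) := by
      rw [Finset.disjoint_left]
      intro w hwu hwv
      have h1 := (memOp u w).1 hwu
      have h2 := (memIn v w).1 hwv
      have hwv' : w ≠ v := noloop w v h2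
      have huw : u ≠ w := noloop u w h1
      refine hP (u, v) he₀ ?_
      refine Relation.ReflTransGen.head
        (step _ u w h1 (fun hh => hwv' (congrArg Prod.snd hh))) ?_
      exact Relation.ReflTransGen.single
        (step _ w v h2 (fun hh => huw (congrArg Prod.fst hh).symm))
    have dInOp : Disjoint (In u) (Op v) := by
      rw [Finset.disjoint_left]
      intro w hwu hwv
      have h1 := (memIn u w).1 hwu
      have h2 := (memOp v w).1 hwv
      refine hacyc u ?_
      refine Relation.TransGen.head he₀ ?_
      refine Relation.TransGen.head h2 ?_
      exact Relation.TransGen.single h1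
    have dOpIn_u : Disjoint (Op u) (In u) := by
      rw [Finset.disjoint_left]
      intro w hwu hwv
      have h1 := (memOp u w).1 hwu
      have h2 := (memIn u w).1 hwv
      exact hacyc u (Relation.TransGen.head h1 (Relation.TransGen.single h2))
    have dOpIn_v : Disjoint (Op v) (In v) := by
      rw [Finset.disjoint_left]
      intro w hwu hwv
      have h1 := (memOp v w).1 hwu
      have h2 := (memIn v w).1 hwv
      exact hacyc v (Relation.TransGen.head h1 (Relation.TransGen.single h2))
    -- sum of neighborhood sizes bounded by |S|
    have hsum : (Op u).card + (In u).card + (Op v).card + (In v).card ≤ S.card := by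
      have d1 : Disjoint (Op u) (In u) := dOpIn_u
      have d2 : Disjoint (Op u ∪ In u) (Op v) :=
        Finset.disjoint_union_left.2 ⟨dOpOp, dInOp⟩
      have d3 : Disjoint (Op u ∪ In u ∪ Op v) (In v) :=
        Finset.disjoint_union_left.2 ⟨Finset.disjoint_union_left.2 ⟨dOpIn_uv, dInIn⟩, dOpIn_v⟩
      have hsub : Op u ∪ In u ∪ Op v ∪ In v ⊆ S := by
        intro w hw
        rcases Finset.mem_union.1 hw with hw | hw
        · rcases Finset.mem_union.1 hw with hw | hw
          · rcases Finset.mem_union.1 hw with hw | hw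
            · exact hOpS u hw
            · exact hInS u hw
          · exact hOpS v hw
        · exact hInS v hw
      calc (Op u).card + (In u).card + (Op v).card + (In v).card
          = (Op u ∪ In u ∪ Op v ∪ In v).card := by
            rw [Finset.card_union_of_disjoint d3, Finset.card_union_of_disjoint d2,
              Finset.card_union_of_disjoint d1]
        _ ≤ S.card := Finset.card_le_card hsub
    set deg : V → ℕ := fun x => (E.filter (fun e => e.1 = x ∨ e.2 = x)).card with hdegdef
    have hdeg : ∀ x, deg x ≤ (Op x).card + (In x).card := by
      intro x
      have h1 : (E.filter (fun e => e.1 = x ∨ e.2 = x)) =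
          (E.filter (fun e => e.1 = x)) ∪ (E.filter (fun e => e.2 = x)) :=
        Finset.filter_or _ _ _
      have h2 : (Op x).card = (E.filter (fun e => e.1 = x)).card := by
        apply Finset.card_image_of_injOn
        rintro ⟨a, b⟩ ha ⟨a', b'⟩ ha' hab
        simp only [Finset.coe_filter, Set.mem_setOf_eq] at ha ha'
        simp only at hab
        simp [ha.2, ha'.2, hab]
      have h3 : (In x).card = (E.filter (fun e => e.2 = x)).card := by
        apply Finset.card_image_of_injOn
        rintro ⟨a, b⟩ ha ⟨a', b'⟩ ha' hab
        simp only [Finset.coe_filter, Set.mem_setOf_eq] at ha ha'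
        simp only at hab
        simp [ha.2, ha'.2, hab]
      rw [hdegdef]
      simp only [h1]
      calc ((E.filter (fun e => e.1 = x)) ∪ (E.filter (fun e => e.2 = x))).card
          ≤ (E.filter (fun e => e.1 = x)).card + (E.filter (fun e => e.2 = x)).card :=
            Finset.card_union_le _ _
        _ = (Op x).card + (In x).card := by rw [h2, h3]
    -- pick endpoint of smaller degree
    set x := if deg u ≤ deg v then u else v with hx
    have hxS : x ∈ S := by rw [hx]; split <;> assumption
    have hdx : deg x * 2 ≤ S.card := by
      have h1 := hdeg u
      have h2 := hdeg v
      rw [hx]; split <;> omega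
    have hdx2 : deg x ≤ S.card / 2 := (Nat.le_div_iff_mul_le (by norm_num)).2 hdx
    set E' := E.filter (fun e => ¬(e.1 = x ∨ e.2 = x)) with hE'
    have hcard : E.card = deg x + E'.card := by
      rw [hdegdef, hE']
      exact (Finset.card_filter_add_card_filter_not _).symm
    have hrec : E'.card ≤ (S.erase x).card ^ 2 / 4 := by
      refine ih (S.erase x) E' ?_ ?_ (goodP_subset (Finset.filter_subset _ _) hP) ?_
      · rw [Finset.card_erase_of_mem hxS]; omega
      · intro e he
        rcases Finset.mem_filter.1 he with ⟨heE, hne⟩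
        push_neg at hne
        obtain ⟨h1, h2, h3⟩ := hend e heE
        exact ⟨Finset.mem_erase.2 ⟨hne.1, h1⟩, Finset.mem_erase.2 ⟨hne.2, h2⟩, h3⟩
      · intro w hw
        refine hacyc w (Relation.TransGen.mono ?_ _ _ hw)
        intro a b hab
        exact Finset.mem_filter.1 hab |>.1
    have hS1 : 1 ≤ S.card := Finset.card_pos.2 ⟨x, hxS⟩
    have := arith_halfsq S.card hS1
    rw [Finset.card_erase_of_mem hxS] at hrec
    omega

end DigraphDef

section MainDigraph

variable {V : Type} [DecidableEq V]

lemma digraph_bound (N : ℕ) : ∀ (S : Finset V) (E : Finset (V × V)),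
    S.card ≤ N →
    (∀ e ∈ E, e.1 ∈ S ∧ e.2 ∈ S ∧ e.1 ≠ e.2) → GoodP E →
    E.card ≤ max (2 * (S.card - 1)) (S.card ^ 2 / 4) := by
  classical
  induction N with
  | zero =>
    intro S E hS hend _
    rcases Finset.eq_empty_or_nonempty E with rfl | ⟨e, he⟩
    · simp
    · exfalso
      have h1 := (hend e he).1
      have : S = ∅ := Finset.card_eq_zero.1 (Nat.le_zero.1 hS)
      rw [this] at h1
      exact absurd h1 (Finset.notMem_empty _)
  | succ N ih =>
    intro S E hS hend hP
    by_cases hacyc : ∀ u : V, ¬ Relation.TransGen (eRel E) u u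
    · exact le_max_of_le_right (dag_bound (N + 1) S E hS hend hP hacyc)
    push_neg at hacyc
    obtain ⟨u₀, hu₀⟩ := hacyc
    set R : V → V → Prop := eRel E with hR
    have noloop : ∀ a b, (a, b) ∈ E → a ≠ b := fun a b hm => (hend _ hm).2.2
    have hCW : ∃ k, ∃ (u : V) (l : List V),
        List.Chain R u (l ++ [u]) ∧ l.length + 1 = k := by
      obtain ⟨b, hub, hbu⟩ := Relation.TransGen.tail'_iff.1 hu₀
      obtain ⟨l, hl, hlast⟩ := List.exists_isChain_cons_of_relationReflTransGen hub
      refine ⟨l.length + 1, u₀, l, chain_snoc l u₀ u₀ hl ?_, rfl⟩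
      rw [hlast]; exact hbu
    obtain ⟨u, l, hchain, hklen⟩ := Nat.find_spec hCW
    have hlne : l ≠ [] := by
      rintro rfl
      simp only [List.nil_append] at hchain
      rcases List.chain_cons.1 hchain with ⟨huu, -⟩
      exact noloop u u huu rfl
    set cs : List V := u :: l with hcs
    have hnodup : cs.Nodup := by
      by_contra hnd
      obtain ⟨a, l₁, l₂, l₃, heq⟩ := exists_dup_split cs hnd
      have hshort : ∃ (u' : V) (l' : List V),
          List.Chain R u' (l' ++ [u']) ∧ l'.length + 1 = l₂.length + 1 := by
        cases l₁ with
        | nil =>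
          simp only [List.nil_append, hcs, List.cons_append, List.cons.injEq] at heq
          obtain ⟨rfl, rfl⟩ := heq
          simp only [List.append_assoc, List.cons_append, List.nil_append] at hchain
          exact ⟨u, l₂, (List.isChain_cons_split.1 hchain).1, rfl⟩
        | cons x l₁' =>
          simp only [hcs, List.cons_append, List.cons.injEq] at heq
          obtain ⟨rfl, rfl⟩ := heq
          simp only [List.append_assoc, List.cons_append, List.nil_append] at hchain
          have h2 := (List.isChain_cons_split.1 hchain).2
          exact ⟨a, l₂, (List.isChain_cons_split.1 h2).1, rfl⟩
      obtain ⟨u', l', hch', hlen'⟩ := hshort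
      have hlt : l₂.length + 1 < Nat.find hCW := by
        rw [← hklen]
        have : cs.length = l₁.length + (l₂.length + (l₃.length + 2)) := by
          rw [heq]; simp; omega
        simp only [hcs, List.length_cons] at this
        omega
      exact Nat.find_min hCW hlt ⟨u', l', hch', hlen'⟩
    -- the cycle data
    set wtail : List V := l ++ [u] with hwtail
    have hlencs : cs.length = l.length + 1 := by simp [hcs]
    have hlenwt : wtail.length = l.length + 1 := by simp [hwtail]
    set pairs : List (V × V) := cs.zip wtail with hpairs
    have hzipeq : (cs ++ [u]).zip wtail = cs.zip wtail :=
      zip_append_right_trunc wtail cs u (by rw [hlencs, hlenwt])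
    have hucons : u :: wtail = cs ++ [u] := by simp [hcs, hwtail]
    have pairsE : ∀ p ∈ pairs, (p.1, p.2) ∈ E := by
      intro p hp
      have := chain_mem_zip wtail u hchain p (by rw [hucons, hzipeq]; exact hp)
      exact this
    have hmapfst : pairs.map Prod.fst = cs :=
      List.map_fst_zip (l₁ := cs) (l₂ := wtail) (by rw [hlencs, hlenwt])
    have hpnodup : pairs.Nodup := nodup_zip_left cs wtail hnodup
    set cycE : Finset (V × V) := pairs.toFinset with hcycE
    have hcycE_card : cycE.card = l.length + 1 := by
      rw [hcycE, List.toFinset_card_of_nodup hpnodup, hpairs, List.length_zip,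
        hlencs, hlenwt, min_self]
    have hcycE_sub : cycE ⊆ E := by
      intro p hp
      have := pairsE p (List.mem_toFinset.1 hp)
      rwa [Prod.mk.eta] at this
    have hpair_mem1 : ∀ p ∈ pairs, p.1 ∈ cs := by
      intro p hp
      have : p.1 ∈ pairs.map Prod.fst := List.mem_map_of_mem hp
      rwa [hmapfst] at this
    have hpair_mem2 : ∀ p ∈ pairs, p.2 ∈ cs := by
      intro p hp
      have h2 : p.2 ∈ wtail := by
        have := List.of_mem_zip (show (p.1, p.2) ∈ cs.zip wtail by rw [Prod.mk.eta]; exact hp)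
        exact this.2
      rw [hwtail] at h2
      rcases List.mem_append.1 h2 with h2 | h2
      · exact List.mem_cons_of_mem _ h2
      · simp only [List.mem_singleton] at h2
        rw [h2, hcs]; exact List.mem_cons_self
    -- detour connectivity within the cycle
    have hchainP : List.Chain (fun a b => (a, b) ∈ cycE) u wtail := by
      refine List.Chain.imp ?_ (chain_pairs wtail u hchain)
      intro a b hab
      rw [hucons, hzipeq] at hab
      exact List.mem_toFinset.2 hab
    have detour : ∀ a b, a ∈ cs → b ∈ cs →
        Relation.ReflTransGen (fun x y => (x, y) ∈ cycE) a b := by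
      intro a b ha hb
      have h1 : Relation.ReflTransGen (fun x y => (x, y) ∈ cycE) a u := by
        refine chain_rtg_last l u u a ?_ ?_
        · exact hchainP
        · rw [hcs] at ha
          rcases List.mem_cons.1 ha with rfl | ha
          · exact List.mem_cons_self
          · exact List.mem_cons_of_mem _ (List.mem_append_left _ ha)
      have h2 : Relation.ReflTransGen (fun x y => (x, y) ∈ cycE) u b := by
        refine chain_rtg_head wtail u b hchainP ?_
        rw [hcs] at hb
        rcases List.mem_cons.1 hb with rfl | hb
        · exact List.mem_cons_self
        · exact List.mem_cons_of_mem _ (List.mem_append_left _ hb)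
      exact h1.trans h2
    have DET : ∀ (t : V × V), t ∉ cycE → ∀ a b, a ∈ cs → b ∈ cs →
        Relation.ReflTransGen (eRel (E.erase t)) a b := by
      intro t ht a b ha hb
      refine Relation.ReflTransGen.mono ?_ _ _ (detour a b ha hb)
      intro x y hxy
      refine Finset.mem_erase.2 ⟨?_, hcycE_sub hxy⟩
      rintro rfl; exact ht hxy
    -- no chords
    have hchord : ∀ a b, a ∈ cs → b ∈ cs → (a, b) ∈ E → (a, b) ∈ cycE := by
      intro a b ha hb hab
      by_contra hnot
      exact hP (a, b) hab (DET (a, b) hnot a b ha hb)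
    -- contraction map
    set σ : V → V := fun x => if x ∈ cs then u else x with hσ
    have σ_mem : ∀ x, x ∈ cs → σ x = u := fun x hx => by rw [hσ]; simp [hx]
    have σ_not : ∀ x, x ∉ cs → σ x = x := fun x hx => by rw [hσ]; simp [hx]
    have hucs : u ∈ cs := by rw [hcs]; exact List.mem_cons_self
    have σcases : ∀ x y, σ x = σ y → x = y ∨ (x ∈ cs ∧ y ∈ cs) := by
      intro x y hxy
      by_cases hx : x ∈ cs <;> by_cases hy : y ∈ cs
      · exact Or.inr ⟨hx, hy⟩
      · exfalso
        rw [σ_mem x hx, σ_not y hy] at hxy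
        exact hy (hxy ▸ hucs)
      · exfalso
        rw [σ_not x hx, σ_mem y hy] at hxy
        exact hx (hxy ▸ hucs)
      · rw [σ_not x hx, σ_not y hy] at hxy
        exact Or.inl hxy
    set rest : Finset (V × V) := E \ cycE with hrest
    have hrestE : ∀ p ∈ rest, p ∈ E := fun p hp => (Finset.mem_sdiff.1 hp).1
    have hrestnotboth : ∀ p ∈ rest, ¬(p.1 ∈ cs ∧ p.2 ∈ cs) := by
      rintro p hp ⟨h1, h2⟩
      have := hchord p.1 p.2 h1 h2 (by rw [Prod.mk.eta]; exact hrestE p hp)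
      rw [Prod.mk.eta] at this
      exact (Finset.mem_sdiff.1 hp).2 this
    have hnotcyc_of_fst : ∀ (a b : V), a ∉ cs → (a, b) ∉ cycE := by
      intro a b ha hmem
      exact ha (hpair_mem1 (a, b) (List.mem_toFinset.1 hmem))
    have hnotcyc_of_snd : ∀ (a b : V), b ∉ cs → (a, b) ∉ cycE := by
      intro a b hb hmem
      exact hb (hpair_mem2 (a, b) (List.mem_toFinset.1 hmem))
    -- collision lemmas
    have col_out : ∀ a a' b, a ∈ cs → a' ∈ cs → b ∉ cs →
        (a, b) ∈ E → (a', b) ∈ E → a = a' := by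
      intro a a' b ha ha' hb h1 h2
      by_contra hne
      refine hP (a', b) h2 ?_
      refine Relation.ReflTransGen.tail (DET (a', b) (hnotcyc_of_snd a' b hb) a' a ha' ha) ?_
      exact Finset.mem_erase.2 ⟨fun hh => hne (congrArg Prod.fst hh), h1⟩
    have col_in : ∀ a b b', a ∉ cs → b ∈ cs → b' ∈ cs →
        (a, b) ∈ E → (a, b') ∈ E → b = b' := by
      intro a b b' ha hb hb' h1 h2
      by_contra hne
      refine hP (a, b') h2 ?_
      refine Relation.ReflTransGen.head ?_ (DET (a, b') (hnotcyc_of_fst a b' ha) b b' hb hb')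
      exact Finset.mem_erase.2 ⟨fun hh => hne (congrArg Prod.snd hh), h1⟩
    -- contracted graph
    set E' : Finset (V × V) := rest.image (fun p => (σ p.1, σ p.2)) with hE'
    set c : Finset V := cs.toFinset with hc
    set S' : Finset V := (S \ c) ∪ {u} with hS'
    have hinj : Set.InjOn (fun p : V × V => (σ p.1, σ p.2)) rest := by
      intro p hp q hq hpq
      have hp' : p ∈ rest := hp
      have hq' : q ∈ rest := hq
      have h1 : σ p.1 = σ q.1 := congrArg Prod.fst hpq
      have h2 : σ p.2 = σ q.2 := congrArg Prod.snd hpq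
      rcases σcases _ _ h1 with he1 | ⟨hc1, hc2⟩
      · rcases σcases _ _ h2 with he2 | ⟨hd1, hd2⟩
        · exact Prod.ext he1 he2
        · -- p.2, q.2 ∈ cs, p.1 = q.1
          have hp1 : p.1 ∉ cs := fun hh => hrestnotboth p hp' ⟨hh, hd1⟩
          have := col_in p.1 p.2 q.2 hp1 hd1 hd2
            (by rw [Prod.mk.eta]; exact hrestE p hp')
            (by rw [he1, Prod.mk.eta]; exact hrestE q hq')
          exact Prod.ext he1 this
      · rcases σcases _ _ h2 with he2 | ⟨hd1, hd2⟩
        · have hp2 : p.2 ∉ cs := fun hh => hrestnotboth p hp' ⟨hc1, hh⟩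
          have := col_out p.1 q.1 p.2 hc1 hc2 hp2
            (by rw [Prod.mk.eta]; exact hrestE p hp')
            (by rw [he2, Prod.mk.eta]; exact hrestE q hq')
          exact Prod.ext this he2
        · exact absurd ⟨hc1, hd1⟩ (hrestnotboth p hp')
    have hcycE_le : cycE.card ≤ E.card := Finset.card_le_card hcycE_sub
    have hEsplit : E.card = E'.card + (l.length + 1) := by
      rw [hE', Finset.card_image_of_injOn hinj, hrest, Finset.card_sdiff_of_subset hcycE_sub,
        hcycE_card]
      omega
    have hcsub : c ⊆ S := by
      intro a ha
      rw [hc, List.mem_toFinset] at ha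
      rw [← hmapfst] at ha
      obtain ⟨p, hp, rfl⟩ := List.mem_map.1 ha
      exact (hend (p.1, p.2) (by rw [Prod.mk.eta]; exact hcycE_sub (List.mem_toFinset.2 hp))).1
    have hccard : c.card = l.length + 1 := by
      rw [hc, List.toFinset_card_of_nodup hnodup, hlencs]
    have huS' : u ∈ S' := by
      rw [hS']; exact Finset.mem_union_right _ (Finset.mem_singleton_self _)
    have hS'card : S'.card = S.card - (l.length + 1) + 1 := by
      rw [hS']
      have hun : u ∉ S \ c := by
        rw [Finset.mem_sdiff]
        rintro ⟨-, hnc⟩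
        exact hnc (by rw [hc]; exact List.mem_toFinset.2 hucs)
      have hdisj : Disjoint (S \ c) ({u} : Finset V) :=
        Finset.disjoint_singleton_right.2 hun
      rw [Finset.card_union_of_disjoint hdisj, Finset.card_singleton,
        Finset.card_sdiff_of_subset hcsub, hccard]
    have hend' : ∀ e ∈ E', e.1 ∈ S' ∧ e.2 ∈ S' ∧ e.1 ≠ e.2 := by
      intro e he
      obtain ⟨p, hp, rfl⟩ := Finset.mem_image.1 he
      have hpE : (p.1, p.2) ∈ E := by rw [Prod.mk.eta]; exact hrestE p hp
      obtain ⟨hp1S, hp2S, hpne⟩ := hend _ hpE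
      simp only at hp1S hp2S hpne
      constructor
      · by_cases h1 : p.1 ∈ cs
        · rw [σ_mem _ h1]; exact huS'
        · rw [σ_not _ h1, hS']
          refine Finset.mem_union_left _ (Finset.mem_sdiff.2 ⟨hp1S, ?_⟩)
          rw [hc, List.mem_toFinset]; exact h1
      constructor
      · by_cases h2 : p.2 ∈ cs
        · rw [σ_mem _ h2]; exact huS'
        · rw [σ_not _ h2, hS']
          refine Finset.mem_union_left _ (Finset.mem_sdiff.2 ⟨hp2S, ?_⟩)
          rw [hc, List.mem_toFinset]; exact h2
      · by_cases h1 : p.1 ∈ cs <;> by_cases h2 : p.2 ∈ cs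
        · exact absurd ⟨h1, h2⟩ (hrestnotboth p hp)
        · rw [σ_mem _ h1, σ_not _ h2]
          intro hh; exact h2 (hh ▸ hucs)
        · rw [σ_not _ h1, σ_mem _ h2]
          intro hh; exact h1 (hh ▸ hucs)
        · rw [σ_not _ h1, σ_not _ h2]; exact hpne
    have hP' : GoodP E' := by
      intro e' he' hrtg
      obtain ⟨p, hp, hpe⟩ := Finset.mem_image.1 he'
      have hpE : p ∈ E := hrestE p hp
      have hpnotcyc : p ∉ cycE := (Finset.mem_sdiff.1 hp).2
      have hpEE : (p.1, p.2) ∈ E := by rw [Prod.mk.eta]; exact hpE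
      have lift : ∀ x' y', Relation.ReflTransGen (eRel (E'.erase e')) x' y' →
          ∀ x, σ x = x' → ∃ y, σ y = y' ∧ Relation.ReflTransGen (eRel (E.erase p)) x y := by
        intro x' y' hr
        induction hr with
        | refl => intro x hx; exact ⟨x, hx, .refl⟩
        | @tail m' y' hr1 hstep ihl =>
          intro x hx
          obtain ⟨m, hm, hrm⟩ := ihl x hx
          have h1 := Finset.mem_erase.1 hstep
          obtain ⟨q, hq, hqe⟩ := Finset.mem_image.1 h1.2
          have hq1 : σ q.1 = m' := congrArg Prod.fst hqe
          have hq2 : σ q.2 = y' := congrArg Prod.snd hqe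
          have hqp : q ≠ p := by
            rintro rfl
            exact h1.1 (by rw [← hqe, hpe])
          have hbr : Relation.ReflTransGen (eRel (E.erase p)) m q.1 := by
            rcases σcases m q.1 (hm.trans hq1.symm) with heq | ⟨hm1, hm2⟩
            · rw [heq]
            · exact DET p hpnotcyc m q.1 hm1 hm2
          refine ⟨q.2, hq2, ?_⟩
          have hstep' : eRel (E.erase p) q.1 q.2 := by
            refine Finset.mem_erase.2 ⟨?_, by rw [Prod.mk.eta]; exact hrestE q hq⟩
            intro hh
            exact hqp (by rw [← Prod.mk.eta (p := q), hh])
          exact hrm.trans (hbr.tail hstep')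
      have hσ1 : σ p.1 = e'.1 := by rw [← hpe]
      have hσ2 : σ p.2 = e'.2 := by rw [← hpe]
      obtain ⟨y, hy, hr⟩ := lift e'.1 e'.2 hrtg p.1 hσ1
      have hbr2 : Relation.ReflTransGen (eRel (E.erase p)) y p.2 := by
        rcases σcases y p.2 (by rw [hy, ← hσ2]) with heq | ⟨h1, h2⟩
        · rw [heq]
        · exact DET p hpnotcyc y p.2 h1 h2
      exact hP p hpE (hr.trans hbr2)
    -- apply induction hypothesis
    have hkS : l.length + 1 ≤ S.card := by
      rw [← hccard]; exact Finset.card_le_card hcsub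
    have hS'le : S'.card ≤ N := by
      rw [hS'card]
      have h2 : 2 ≤ l.length + 1 := by
        have : l.length ≠ 0 := fun hh => hlne (List.length_eq_zero_iff.1 hh)
        omega
      omega
    have hrec := ih S' E' hS'le hend' hP'
    rw [hS'card] at hrec
    have harith := arith_contract S.card (l.length + 1)
      (by have : l.length ≠ 0 := fun hh => hlne (List.length_eq_zero_iff.1 hh); omega) hkS
    rw [hEsplit]
    exact le_trans (Nat.add_le_add_right hrec _) harith

end MainDigraph

theorem stmt5 (t n : ℕ) (F : Finset (Fin n → Fin t))
    (h : ∀ i : Fin n, Separating (F : Set (Fin n → Fin t)) i) :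
    n ≤ max (2 * (F.card - 1)) (F.card ^ 2 / 4) := by
  classical
  choose f hf g hg hne hmono hlt using h
  set E : Finset ((Fin n → Fin t) × (Fin n → Fin t)) :=
    Finset.image (fun i => (f i, g i)) Finset.univ with hE
  have hinj : Function.Injective (fun i => (f i, g i)) := by
    intro i j hij
    by_contra hne'
    have h1 : f i = f j := congrArg Prod.fst hij
    have h2 : g i = g j := congrArg Prod.snd hij
    have h3 := hlt i
    have h4 : f j i ≤ g j i := hmono j i (fun hh => hne' (hh ▸ rfl))
    rw [← h1, ← h2] at h4
    exact absurd h3 (not_lt.2 h4)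
  have hcardE : E.card = n := by
    rw [hE, Finset.card_image_of_injective _ hinj, Finset.card_univ, Fintype.card_fin]
  have hend : ∀ e ∈ E, e.1 ∈ F ∧ e.2 ∈ F ∧ e.1 ≠ e.2 := by
    intro e he
    obtain ⟨i, -, hie⟩ := Finset.mem_image.1 he
    rw [← hie]
    exact ⟨Finset.mem_coe.1 (hf i), Finset.mem_coe.1 (hg i), hne i⟩
  have hP : GoodP E := by
    intro e he hrtg
    obtain ⟨i, -, hie⟩ := Finset.mem_image.1 he
    have key : ∀ x y, Relation.ReflTransGen (eRel (E.erase e)) x y → x i ≤ y i := by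
      intro x y hr
      induction hr with
      | refl => exact le_refl _
      | @tail m y h1 h2 ihl =>
        rcases Finset.mem_erase.1 h2 with ⟨hnee, hmem⟩
        obtain ⟨j, -, hje⟩ := Finset.mem_image.1 hmem
        have hji : i ≠ j := by
          rintro rfl
          exact hnee (by rw [← hje]; exact hie)
        have hmj : f j i ≤ g j i := hmono j i hji
        have hm1 : m = f j := (congrArg Prod.fst hje).symm
        have hm2 : y = g j := (congrArg Prod.snd hje).symm
        rw [hm2]
        exact le_trans (le_of_le_of_eq ihl (by rw [hm1])) hmj
    have h5 := key e.1 e.2 hrtg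
    have h6 : (f i) i ≤ (g i) i := by
      have hh1 : e.1 = f i := (congrArg Prod.fst hie).symm
      have hh2 : e.2 = g i := (congrArg Prod.snd hie).symm
      rwa [hh1, hh2] at h5
    exact absurd (hlt i) (not_lt.2 h6)
  have hmain := digraph_bound (V := Fin n → Fin t) F.card F E le_rfl hend hP
  rw [hcardE] at hmain
  exact hmain
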